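/- Suppose m, n ≥ p ≥ 1 are integers, ε = (ε_1, …, ε_p) ∈ {±1}^p, and A is an m×n real matrix. Then A is SSR_p(ε) if and only if for every k ∈ {1, …, p}, every k×k contiguous minor of A has sign ε_k. -/

import Mathlib

namespace SSRAux

open Matrix Fin

variable {j : ℕ}

/-- Square matrix whose first `j` rows are `C` and last two rows are `u, v`. -/
def gmat (C : Fin j → Fin (j+2) → ℝ) (u v : Fin (j+2) → ℝ) :
    Matrix (Fin (j+2)) (Fin (j+2)) ℝ :=
  Matrix.of (Fin.snoc (Fin.snoc C u) v)

def G (C : Fin j → Fin (j+2) → ℝ) (u v : Fin (j+2) → ℝ) : ℝ := (gmat C u v).det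

lemma gmat_last (C : Fin j → Fin (j+2) → ℝ) (u v : Fin (j+2) → ℝ) :
    gmat C u v (Fin.last (j+1)) = v := by
  funext jj
  simp [gmat, Matrix.of_apply]

lemma gmat_castSucc_last (C : Fin j → Fin (j+2) → ℝ) (u v : Fin (j+2) → ℝ) :
    gmat C u v (Fin.castSucc (Fin.last j)) = u := by
  funext jj
  simp [gmat, Matrix.of_apply]

lemma gmat_castSucc_castSucc (C : Fin j → Fin (j+2) → ℝ) (u v : Fin (j+2) → ℝ) (i : Fin j) :
    gmat C u v (Fin.castSucc (Fin.castSucc i)) = C i := by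
  funext jj
  simp [gmat, Matrix.of_apply]

lemma gmat_eq_updateRow (C : Fin j → Fin (j+2) → ℝ) (u v v' : Fin (j+2) → ℝ) :
    gmat C u v = Matrix.updateRow (gmat C u v') (Fin.last (j+1)) v := by
  funext i jj
  rcases eq_or_ne i (Fin.last (j+1)) with rfl | hi
  · rw [gmat_last, Matrix.updateRow_self]
  · rw [Matrix.updateRow_ne hi]
    obtain ⟨i', rfl⟩ := Fin.exists_castSucc_eq.2 hi
    simp [gmat, Matrix.of_apply]

lemma G_add (C : Fin j → Fin (j+2) → ℝ) (u a b : Fin (j+2) → ℝ) :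
    G C u (a + b) = G C u a + G C u b := by
  unfold G
  rw [gmat_eq_updateRow C u (a+b) 0, gmat_eq_updateRow C u a 0, gmat_eq_updateRow C u b 0]
  exact Matrix.det_updateRow_add _ _ _ _

lemma G_smul (C : Fin j → Fin (j+2) → ℝ) (u a : Fin (j+2) → ℝ) (t : ℝ) :
    G C u (t • a) = t * G C u a := by
  unfold G
  rw [gmat_eq_updateRow C u (t • a) 0, gmat_eq_updateRow C u a 0]
  exact Matrix.det_updateRow_smul _ _ _ _

lemma G_zero (C : Fin j → Fin (j+2) → ℝ) (u : Fin (j+2) → ℝ) :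
    G C u 0 = 0 := by
  have := G_smul C u 0 0
  simpa using this

lemma G_swap (C : Fin j → Fin (j+2) → ℝ) (u v : Fin (j+2) → ℝ) :
    G C u v = - G C v u := by
  have hne : (Fin.castSucc (Fin.last j)) ≠ (Fin.last (j+1)) := by
    simp [Fin.ext_iff]
  have h : gmat C u v = (gmat C v u).submatrix
      (Equiv.swap (Fin.castSucc (Fin.last j)) (Fin.last (j+1))) id := by
    funext i jj
    rcases eq_or_ne i (Fin.last (j+1)) with rfl | hi
    · rw [gmat_last]
      simp only [Matrix.submatrix_apply, Equiv.swap_apply_right, id_eq]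
      rw [gmat_castSucc_last]
    · obtain ⟨i', rfl⟩ := Fin.exists_castSucc_eq.2 hi
      rcases eq_or_ne i' (Fin.last j) with rfl | hi'
      · rw [gmat_castSucc_last]
        simp only [Matrix.submatrix_apply, Equiv.swap_apply_left, id_eq]
        rw [gmat_last]
      · obtain ⟨i'', rfl⟩ := Fin.exists_castSucc_eq.2 hi'
        rw [gmat_castSucc_castSucc]
        have h1 : Fin.castSucc (Fin.castSucc i'') ≠ Fin.castSucc (Fin.last j) := by
          simp only [ne_eq, Fin.castSucc_inj]
          exact hi'
        have h2 : Fin.castSucc (Fin.castSucc i'') ≠ Fin.last (j+1) := by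
          simp [Fin.ext_iff]; omega
        simp only [Matrix.submatrix_apply, Equiv.swap_apply_of_ne_of_ne h1 h2, id_eq]
        rw [gmat_castSucc_castSucc]
  unfold G
  rw [h, Matrix.det_permute]
  rw [Equiv.Perm.sign_swap hne]
  push_cast
  ring

lemma G_self (C : Fin j → Fin (j+2) → ℝ) (u : Fin (j+2) → ℝ) :
    G C u u = 0 := by
  apply Matrix.det_zero_of_row_eq (i := Fin.castSucc (Fin.last j)) (j := Fin.last (j+1))
  · simp [Fin.ext_iff]
  · rw [gmat_castSucc_last, gmat_last]

lemma G_row (C : Fin j → Fin (j+2) → ℝ) (u : Fin (j+2) → ℝ) (i : Fin j) :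
    G C u (C i) = 0 := by
  apply Matrix.det_zero_of_row_eq (i := Fin.castSucc (Fin.castSucc i)) (j := Fin.last (j+1))
  · simp [Fin.ext_iff]; omega
  · rw [gmat_castSucc_castSucc, gmat_last]

lemma det_eq_zero_of_rows_mem {d : ℕ} (N : Matrix (Fin (d+1)) (Fin (d+1)) ℝ)
    (U : Submodule ℝ (Fin (d+1) → ℝ)) (hU : U ≠ ⊤) (h : ∀ i, N i ∈ U) : N.det = 0 := by
  by_contra hdet
  have hli : LinearIndependent ℝ (fun i => N i) := by
    rw [Fintype.linearIndependent_iff]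
    intro g hg
    by_contra hg'
    push_neg at hg'
    obtain ⟨i0, hi0⟩ := hg'
    have : ∃ v ≠ 0, Matrix.vecMul v N = 0 := by
      refine ⟨g, ?_, ?_⟩
      · intro h0; exact hi0 (by rw [h0]; rfl)
      · funext jj
        have := congrFun hg jj
        simpa [Matrix.vecMul, dotProduct, Finset.sum_apply] using this
    exact hdet (Matrix.exists_vecMul_eq_zero_iff.mp this)
  have hspan : Submodule.span ℝ (Set.range fun i => N i) = ⊤ := by
    apply hli.span_eq_top_of_card_eq_finrank
    simp [Module.finrank_fintype_fun_eq_card]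
  apply hU
  rw [eq_top_iff, ← hspan]
  rw [Submodule.span_le]
  rintro _ ⟨i, rfl⟩
  exact h i

lemma gp3 (C : Fin j → Fin (j+2) → ℝ) (w x y z : Fin (j+2) → ℝ) :
    G C w x * G C y z - G C w y * G C x z + G C w z * G C x y = 0 := by
  by_cases hU : Submodule.span ℝ (Set.range C ∪ {w, x, y}) = ⊤
  · have hz : z ∈ Submodule.span ℝ (Set.range C ∪ {w, x, y}) := by
      rw [hU]; exact Submodule.mem_top
    induction hz using Submodule.span_induction with
    | mem s hs =>
      simp only [Set.mem_union, Set.mem_range, Set.mem_insert_iff, Set.mem_singleton_iff] at hs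
      rcases hs with ⟨i, rfl⟩ | rfl | rfl | rfl
      · rw [G_row, G_row, G_row]; ring
      · rw [G_self, G_swap C y s, G_swap C x s]; ring
      · rw [G_self, G_swap C y s]; ring
      · rw [G_self]; ring
    | zero => rw [G_zero, G_zero, G_zero]; ring
    | add a b _ _ ha hb => rw [G_add, G_add, G_add]; linear_combination ha + hb
    | smul t a _ ha => rw [G_smul, G_smul, G_smul]; linear_combination t * ha
  · have hrows : ∀ (u v : Fin (j+2) → ℝ), u ∈ Submodule.span ℝ (Set.range C ∪ {w, x, y}) →
        v ∈ Submodule.span ℝ (Set.range C ∪ {w, x, y}) → G C u v = 0 := by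
      intro u v hu hv
      apply det_eq_zero_of_rows_mem _ _ hU
      intro i
      rcases eq_or_ne i (Fin.last (j+1)) with rfl | hi
      · rw [gmat_last]; exact hv
      · obtain ⟨i', rfl⟩ := Fin.exists_castSucc_eq.2 hi
        rcases eq_or_ne i' (Fin.last j) with rfl | hi'
        · rw [gmat_castSucc_last]; exact hu
        · obtain ⟨i'', rfl⟩ := Fin.exists_castSucc_eq.2 hi'
          rw [gmat_castSucc_castSucc]
          exact Submodule.subset_span (Or.inl ⟨i'', rfl⟩)
    have hw : w ∈ Submodule.span ℝ (Set.range C ∪ {w, x, y}) :=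
      Submodule.subset_span (Or.inr (by simp))
    have hx : x ∈ Submodule.span ℝ (Set.range C ∪ {w, x, y}) :=
      Submodule.subset_span (Or.inr (by simp))
    have hy : y ∈ Submodule.span ℝ (Set.range C ∪ {w, x, y}) :=
      Submodule.subset_span (Or.inr (by simp))
    rw [hrows w x hw hx, hrows w y hw hy, hrows x y hx hy]
    ring

lemma det_last_row_single {d : ℕ} (N : Matrix (Fin (d+1)) (Fin (d+1)) ℝ) (t : Fin (d+1))
    (h : N (Fin.last d) = Pi.single t 1) :
    N.det = (-1)^(d + t.val) * (N.submatrix Fin.castSucc t.succAbove).det := by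
  rw [Matrix.det_succ_row N (Fin.last d)]
  rw [Finset.sum_eq_single t]
  · rw [h, Pi.single_eq_same, Fin.succAbove_last, Fin.val_last]
    ring
  · intro b _ hbt
    rw [h, Pi.single_eq_of_ne hbt]
    ring
  · intro ht; exact absurd (Finset.mem_univ t) ht

variable {k : ℕ}

/-- minor of `B` deleting row `t`. -/
def dmin (B : Matrix (Fin (k+2)) (Fin (k+1)) ℝ) (t : Fin (k+2)) : ℝ :=
  (B.submatrix t.succAbove id).det

/-- minor of `B` deleting rows `castSucc x` and `y` (for `castSucc x < y`) and the last column. -/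
def mmin (B : Matrix (Fin (k+2)) (Fin (k+1)) ℝ) (x : Fin (k+1)) (y : Fin (k+2)) : ℝ :=
  (B.submatrix (y.succAbove ∘ x.succAbove) Fin.castSucc).det

lemma bridge1 (B : Matrix (Fin (k+2)) (Fin (k+1)) ℝ) (t : Fin (k+2)) :
    G (Fin.init fun jj rr => B rr jj) ((fun jj rr => B rr jj) (Fin.last k)) (Pi.single t 1)
      = (-1)^(k + 1 + t.val) * dmin B t := by
  set T : Fin (k+1) → Fin (k+2) → ℝ := fun jj rr => B rr jj with hT
  unfold G
  rw [det_last_row_single _ t (gmat_last _ _ _)]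
  congr 1
  have hsub : (gmat (Fin.init T) (T (Fin.last k)) (Pi.single t 1)).submatrix
      Fin.castSucc t.succAbove = (B.submatrix t.succAbove id).transpose := by
    ext i jj
    have hrow : gmat (Fin.init T) (T (Fin.last k)) (Pi.single t 1) (Fin.castSucc i) = T i := by
      rcases eq_or_ne i (Fin.last k) with rfl | hi
      · rw [gmat_castSucc_last]
      · obtain ⟨i', rfl⟩ := Fin.exists_castSucc_eq.2 hi
        rw [gmat_castSucc_castSucc]
        rfl
    simp only [Matrix.submatrix_apply, Matrix.transpose_apply, id_eq]
    rw [hrow]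
  rw [hsub, Matrix.det_transpose]
  rfl

lemma bridge2 (B : Matrix (Fin (k+2)) (Fin (k+1)) ℝ) (x : Fin (k+1)) (y : Fin (k+2))
    (hxy : Fin.castSucc x < y) :
    G (Fin.init fun jj rr => B rr jj) (Pi.single (Fin.castSucc x) 1) (Pi.single y 1)
      = (-1)^(x.val + y.val + 1) * mmin B x y := by
  set T : Fin (k+1) → Fin (k+2) → ℝ := fun jj rr => B rr jj with hT
  set C : Fin k → Fin (k+2) → ℝ := Fin.init T with hC
  unfold G
  rw [det_last_row_single _ y (gmat_last _ _ _)]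
  set N2 : Matrix (Fin (k+1)) (Fin (k+1)) ℝ :=
    (gmat C (Pi.single (Fin.castSucc x) 1) (Pi.single y 1)).submatrix Fin.castSucc y.succAbove
    with hN2
  have hlast : N2 (Fin.last k) = Pi.single x 1 := by
    funext jj
    have : N2 (Fin.last k) jj = (Pi.single (Fin.castSucc x) 1 : Fin (k+2) → ℝ) (y.succAbove jj) := by
      simp only [hN2, Matrix.submatrix_apply]
      rw [gmat_castSucc_last]
    rw [this]
    rcases eq_or_ne jj x with rfl | hjj
    · rw [Fin.succAbove_of_castSucc_lt _ _ hxy, Pi.single_eq_same, Pi.single_eq_same]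
    · rw [Pi.single_eq_of_ne hjj]
      apply Pi.single_eq_of_ne
      intro hcon
      apply hjj
      apply Fin.succAbove_right_injective (p := y)
      rw [hcon, Fin.succAbove_of_castSucc_lt _ _ hxy]
  rw [det_last_row_single N2 x hlast]
  have hsub : N2.submatrix Fin.castSucc x.succAbove
      = (B.submatrix (y.succAbove ∘ x.succAbove) Fin.castSucc).transpose := by
    ext i jj
    simp only [hN2, Matrix.submatrix_apply, Matrix.transpose_apply, Function.comp_apply]
    rw [gmat_castSucc_castSucc]
    rfl
  rw [hsub, Matrix.det_transpose]
  rw [← mul_assoc, ← pow_add]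
  have hpar : ∀ (a b : ℕ), a % 2 = b % 2 → ((-1 : ℝ))^a = (-1)^b := by
    intro a b hab
    rcases Nat.even_or_odd a with ha | ha
    · have ha' := Nat.even_iff.1 ha
      have hb : Even b := Nat.even_iff.2 (by omega)
      rw [ha.neg_one_pow, hb.neg_one_pow]
    · have ha' := Nat.odd_iff.1 ha
      have hb : Odd b := Nat.odd_iff.2 (by omega)
      rw [ha.neg_one_pow, hb.neg_one_pow]
  rw [hpar ((k + 1 + y.val) + (k + x.val)) (x.val + y.val + 1) (by omega)]
  rfl

lemma sign_flip {p : ℕ} {X Y : ℝ} (h : X = (-1)^p * Y) : Y = (-1)^p * X := by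
  rw [h, ← mul_assoc, ← pow_add, Even.neg_one_pow ⟨p, rfl⟩, one_mul]

lemma threeTerm (B : Matrix (Fin (k+2)) (Fin (k+1)) ℝ) (a b : Fin (k+1)) (c : Fin (k+2))
    (hab : a < b) (hbc : Fin.castSucc b < c) :
    dmin B (Fin.castSucc a) * mmin B b c - dmin B (Fin.castSucc b) * mmin B a c
      + dmin B c * mmin B a (Fin.castSucc b) = 0 := by
  have hac : Fin.castSucc a < c := lt_trans (Fin.castSucc_lt_castSucc_iff.2 hab) hbc
  have hgp := gp3 (Fin.init fun jj rr => B rr jj) ((fun jj rr => B rr jj) (Fin.last k))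
    (Pi.single (Fin.castSucc a) 1) (Pi.single (Fin.castSucc b) 1) (Pi.single c 1)
  have h1 := bridge1 B (Fin.castSucc a)
  have h2 := bridge1 B (Fin.castSucc b)
  have h3 := bridge1 B c
  have m1 := bridge2 B b c hbc
  have m2 := bridge2 B a c hac
  have m3 := bridge2 B a (Fin.castSucc b) (Fin.castSucc_lt_castSucc_iff.2 hab)
  simp only [Fin.coe_castSucc] at h1 h2 h3 m1 m2 m3
  rw [sign_flip h1, sign_flip h2, sign_flip h3, sign_flip m1, sign_flip m2, sign_flip m3]
  linear_combination ((-1 : ℝ))^((k + 1 + a.val) + (b.val + c.val + 1)) * hgp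

lemma strictMono_le_val {d M : ℕ} (r : Fin (d+1) → Fin M) (hr : StrictMono r)
    (i : Fin (d+1)) : (r 0).val + i.val ≤ (r i).val := by
  induction i using Fin.induction with
  | zero => simp
  | succ i ihi =>
    have h := hr (Fin.castSucc_lt_succ (i := i))
    rw [Fin.lt_def] at h
    rw [Fin.val_succ]
    simp only [Fin.coe_castSucc] at ihi
    omega

lemma rowext {M : ℕ} (Mat : Matrix (Fin M) (Fin (k+1)) ℝ) (u v : ℝ)
    (h1 : ∀ (a : ℕ) (ha : a + (k+1) ≤ M),
      0 < u * (Mat.submatrix (fun i : Fin (k+1) => (⟨a + i.val, by omega⟩ : Fin M)) id).det)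
    (h2 : ∀ r : Fin k → Fin M, StrictMono r → 0 < v * (Mat.submatrix r Fin.castSucc).det) :
    ∀ r : Fin (k+1) → Fin M, StrictMono r → 0 < u * (Mat.submatrix r id).det := by
  have hbase : ∀ (r : Fin (k+1) → Fin M), (∀ i, (r i).val = (r 0).val + i.val) →
      0 < u * (Mat.submatrix r id).det := by
    intro r hcont
    have hlt := (r (Fin.last k)).isLt
    have hlast := hcont (Fin.last k)
    rw [Fin.val_last] at hlast
    obtain ⟨a, ha0⟩ : ∃ a, a = (r 0).val := ⟨_, rfl⟩
    have ha : a + (k+1) ≤ M := by omega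
    have hrw : r = (fun i : Fin (k+1) => (⟨a + i.val, by omega⟩ : Fin M)) := by
      funext i
      apply Fin.ext
      show (r i).val = a + i.val
      rw [ha0]
      exact hcont i
    rw [hrw]
    exact h1 a ha
  suffices H : ∀ (N : ℕ) (r : Fin (k+1) → Fin M), StrictMono r →
      (r (Fin.last k)).val - (r 0).val ≤ N → 0 < u * (Mat.submatrix r id).det by
    intro r hr
    exact H _ r hr le_rfl
  intro N
  induction N with
  | zero =>
    intro r hr hN
    apply hbase
    intro i
    have hl := strictMono_le_val r hr i
    have hll := strictMono_le_val r hr (Fin.last k)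
    have hle : (r i).val ≤ (r (Fin.last k)).val := Fin.le_def.1 (hr.monotone (Fin.le_last i))
    have hik : i.val < k + 1 := i.isLt
    rw [Fin.val_last] at hll
    omega
  | succ N ih =>
    intro r hr hN
    by_cases hcont : ∀ i, (r i).val = (r 0).val + i.val
    · exact hbase r hcont
    · -- find a gap
      have hgap : ∃ s : Fin k, (r (Fin.castSucc s)).val + 1 < (r s.succ).val := by
        by_contra hg
        push_neg at hg
        push_neg at hcont
        obtain ⟨i0, hi0⟩ := hcont
        apply hi0
        clear hi0
        induction i0 using Fin.induction with
        | zero => simp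
        | succ i ihi =>
          have h1' := hg i
          have h2' := hr (Fin.castSucc_lt_succ (i := i))
          rw [Fin.lt_def] at h2'
          rw [Fin.val_succ]
          simp only [Fin.coe_castSucc] at ihi
          omega
      obtain ⟨s, hs⟩ := hgap
      set pos : Fin (k+2) := Fin.castSucc s.succ with hposdef
      have hqlt : (r (Fin.castSucc s)).val + 1 < M := by
        have := (r s.succ).isLt
        omega
      obtain ⟨q, hqval⟩ : ∃ q : Fin M, q.val = (r (Fin.castSucc s)).val + 1 :=
        ⟨⟨(r (Fin.castSucc s)).val + 1, hqlt⟩, rfl⟩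
      set r' : Fin (k+2) → Fin M := Fin.insertNth pos q r with hr'def
      have hri : ∀ i : Fin (k+1), r' (pos.succAbove i) = r i := by
        intro i
        rw [hr'def]
        exact Fin.insertNth_apply_succAbove (α := fun _ => Fin M) pos q r i
      have hrpos : r' pos = q := by
        rw [hr'def]
        exact Fin.insertNth_apply_same (α := fun _ => Fin M) pos q r
      have hmono : StrictMono r' := by
        intro t1 t2 hlt
        rcases eq_or_ne t1 pos with rfl | h1'
        · obtain ⟨jj, rfl⟩ := Fin.exists_succAbove_eq hlt.ne'
          rw [hrpos, hri jj]
          have hj : pos ≤ Fin.castSucc jj := by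
            by_contra hcon
            push_neg at hcon
            rw [Fin.succAbove_of_castSucc_lt _ _ hcon] at hlt
            exact absurd hlt (not_lt.2 hcon.le)
          rw [hposdef] at hj
          have hsj : s.succ ≤ jj := Fin.castSucc_le_castSucc_iff.1 hj
          have hmle : (r s.succ).val ≤ (r jj).val := Fin.le_def.1 (hr.monotone hsj)
          rw [Fin.lt_def, hqval]
          omega
        · rcases eq_or_ne t2 pos with rfl | h2'
          · obtain ⟨jj, rfl⟩ := Fin.exists_succAbove_eq h1'
            rw [hrpos, hri jj]
            have hj : Fin.castSucc jj < pos := by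
              by_contra hcon
              push_neg at hcon
              rw [Fin.succAbove_of_le_castSucc _ _ hcon] at hlt
              exact absurd hlt (not_lt.2 (hcon.trans (Fin.castSucc_lt_succ (i := jj)).le))
            rw [hposdef] at hj
            have hjs : jj < s.succ := Fin.castSucc_lt_castSucc_iff.1 hj
            have hsj : jj ≤ Fin.castSucc s := by
              rw [Fin.le_def, Fin.coe_castSucc]
              rw [Fin.lt_def, Fin.val_succ] at hjs
              omega
            have hmle : (r jj).val ≤ (r (Fin.castSucc s)).val := Fin.le_def.1 (hr.monotone hsj)
            rw [Fin.lt_def, hqval]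
            omega
          · obtain ⟨j1, rfl⟩ := Fin.exists_succAbove_eq h1'
            obtain ⟨j2, rfl⟩ := Fin.exists_succAbove_eq h2'
            rw [hri, hri]
            exact hr (by rwa [Fin.succAbove_lt_succAbove_iff] at hlt)
      have h0 : r' 0 = r 0 := by
        have hz : pos.succAbove 0 = 0 := by
          rw [Fin.succAbove_of_castSucc_lt _ _ ?_]
          · rw [Fin.castSucc_zero]
          · rw [hposdef, Fin.castSucc_zero]
            have : (0 : Fin (k+2)) ≤ Fin.castSucc s.succ := Fin.zero_le _
            rcases this.lt_or_eq with h | h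
            · exact h
            · exfalso
              have := congrArg Fin.val h
              rw [Fin.coe_castSucc, Fin.val_succ] at this
              simp at this
        rw [← hz, hri]
      have hlast : r' (Fin.last (k+1)) = r (Fin.last k) := by
        have hz : pos.succAbove (Fin.last k) = Fin.last (k+1) := by
          rw [Fin.succAbove_of_le_castSucc _ _ ?_, Fin.succ_last]
          rw [hposdef]
          exact Fin.castSucc_le_castSucc_iff.2 (Fin.le_last s.succ)
        rw [← hz, hri]
      -- the three-term identity
      set B : Matrix (Fin (k+2)) (Fin (k+1)) ℝ := Mat.submatrix r' id with hBdef
      have htt := threeTerm B 0 s.succ (Fin.last (k+1)) (Fin.succ_pos s)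
        (by rw [Fin.lt_def, Fin.coe_castSucc, Fin.val_succ, Fin.val_last]; have := s.isLt; omega)
      -- identify the five minors
      have hsub : ∀ {d e : ℕ} (f : Fin d → Fin (k+2)) (g : Fin e → Fin (k+1)),
          B.submatrix f g = Mat.submatrix (r' ∘ f) g := by
        intro d e f g
        rw [hBdef, Matrix.submatrix_submatrix]
        rfl
      have ezero : (Fin.castSucc (0 : Fin (k+1))).succAbove = (Fin.succ : Fin (k+1) → Fin (k+2)) := by
        rw [Fin.castSucc_zero, Fin.succAbove_zero]
      have hco : r' ∘ pos.succAbove = r := funext hri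
      have eb : dmin B (Fin.castSucc s.succ) = (Mat.submatrix r id).det := by
        unfold dmin
        rw [hsub, hco]
      have ea : dmin B (Fin.castSucc (0 : Fin (k+1))) = (Mat.submatrix (r' ∘ Fin.succ) id).det := by
        unfold dmin
        rw [hsub, ezero]
      have ec : dmin B (Fin.last (k+1)) = (Mat.submatrix (r' ∘ Fin.castSucc) id).det := by
        unfold dmin
        rw [hsub, Fin.succAbove_last]
      -- positivity of the outer minors by induction hypothesis
      have hr'1 : (r 0).val < (r' 1).val := by
        have h01 : (0 : Fin (k+2)) < 1 := by
          rw [Fin.lt_def, Fin.val_zero, Fin.val_one]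
          omega
        have := hmono h01
        rw [Fin.lt_def, h0] at this
        exact this
      have hda : 0 < u * (Mat.submatrix (r' ∘ Fin.succ) id).det := by
        apply ih _ (hmono.comp Fin.strictMono_succ)
        have e1 : (r' ∘ Fin.succ) (Fin.last k) = r (Fin.last k) := by
          simp only [Function.comp_apply, Fin.succ_last]
          exact hlast
        have e2 : ((r' ∘ Fin.succ) 0) = r' 1 := by
          simp only [Function.comp_apply]
          rw [Fin.succ_zero_eq_one]
        rw [e1, e2]
        omega
      have hdc : 0 < u * (Mat.submatrix (r' ∘ Fin.castSucc) id).det := by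
        apply ih _ (hmono.comp Fin.strictMono_castSucc)
        have e1 : (r' ∘ Fin.castSucc) 0 = r 0 := by
          simp only [Function.comp_apply, Fin.castSucc_zero]
          exact h0
        have e2 : ((r' ∘ Fin.castSucc) (Fin.last k)).val < (r (Fin.last k)).val := by
          simp only [Function.comp_apply]
          have hcl : Fin.castSucc (Fin.last k) < Fin.last (k+1) := by
            rw [Fin.lt_def, Fin.coe_castSucc, Fin.val_last, Fin.val_last]
            omega
          have := hmono hcl
          rw [Fin.lt_def, hlast] at this
          exact this
        rw [e1]
        omega
      -- positivity of the three complementary minors via h2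
      have hm : ∀ (x : Fin (k+1)) (y : Fin (k+2)), 0 < v * mmin B x y := by
        intro x y
        unfold mmin
        rw [hsub]
        exact h2 _ (hmono.comp ((Fin.strictMono_succAbove y).comp (Fin.strictMono_succAbove x)))
      have hm1 := hm s.succ (Fin.last (k+1))
      have hm2 := hm 0 (Fin.last (k+1))
      have hm3 := hm 0 (Fin.castSucc s.succ)
      rw [ea, eb, ec] at htt
      set X := (Mat.submatrix r id).det
      set DA := (Mat.submatrix (r' ∘ Fin.succ) id).det
      set DC := (Mat.submatrix (r' ∘ Fin.castSucc) id).det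
      set M1 := mmin B s.succ (Fin.last (k+1))
      set M2 := mmin B 0 (Fin.last (k+1))
      set M3 := mmin B 0 (Fin.castSucc s.succ)
      have key : (u * X) * (v * M2) = (u * DA) * (v * M1) + (u * DC) * (v * M3) := by
        linear_combination (-(u * v)) * htt
      have hpos : 0 < (u * X) * (v * M2) := by
        rw [key]
        exact add_pos (mul_pos hda hm1) (mul_pos hdc hm3)
      by_contra hcon
      push_neg at hcon
      nlinarith [hpos, hm2, hcon]

end SSRAux

/-- `A` is strictly sign regular of order `p` with sign pattern `ε` (`SSR_p(ε)`):
for every `k ∈ {1, …, p}` (here `k = kk.val + 1` for `kk : Fin p`), every `k × k` minor of `A`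
(the determinant of the submatrix on any `k` rows and `k` columns taken in increasing order)
has sign `ε k`, i.e. `ε k` times the minor is strictly positive. -/
def IsSSRp (p : ℕ) {m n : ℕ} (A : Matrix (Fin m) (Fin n) ℝ) (ε : Fin p → ℝ) : Prop :=
  ∀ (kk : Fin p) (r : Fin (kk.val + 1) → Fin m) (c : Fin (kk.val + 1) → Fin n),
    StrictMono r → StrictMono c → 0 < ε kk * (A.submatrix r c).det

theorem stmt_1 (m n p : ℕ) (hp : 1 ≤ p) (hpm : p ≤ m) (hpn : p ≤ n)
    (ε : Fin p → ℝ) (hε : ∀ i, ε i = 1 ∨ ε i = -1)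
    (A : Matrix (Fin m) (Fin n) ℝ) :
    IsSSRp p A ε ↔
      ∀ (kk : Fin p) (a b : ℕ) (ha : a + (kk.val + 1) ≤ m) (hb : b + (kk.val + 1) ≤ n),
        0 < ε kk *
          (A.submatrix (fun i : Fin (kk.val + 1) => (⟨a + i.val, by omega⟩ : Fin m))
            (fun j : Fin (kk.val + 1) => (⟨b + j.val, by omega⟩ : Fin n))).det := by
  constructor
  · intro hS kk a b ha hb
    exact hS kk _ _
      (fun i j hij => by rw [Fin.mk_lt_mk]; exact Nat.add_lt_add_left hij a)
      (fun i j hij => by rw [Fin.mk_lt_mk]; exact Nat.add_lt_add_left hij b)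
  · intro h
    suffices H : ∀ (K : ℕ) (hK : K < p) (r : Fin (K + 1) → Fin m) (c : Fin (K + 1) → Fin n),
        StrictMono r → StrictMono c → 0 < ε ⟨K, hK⟩ * (A.submatrix r c).det by
      intro kk r c hr hc
      have := H kk.val kk.isLt r c hr hc
      simpa using this
    intro K
    induction K using Nat.strong_induction_on with
    | _ K ih =>
      rcases K with _ | K'
      · -- 1×1 minors
        intro hK r c hr hc
        have hent : ∀ (i : Fin m) (j : Fin n), 0 < ε ⟨0, hK⟩ * A i j := by
          intro i j
          have hb := h ⟨0, hK⟩ i.val j.val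
            (by show i.val + (0 + 1) ≤ m; have := i.isLt; omega)
            (by show j.val + (0 + 1) ≤ n; have := j.isLt; omega)
          rw [Matrix.det_fin_one] at hb
          rw [Matrix.submatrix_apply] at hb
          convert hb using 3 <;> exact Fin.ext (by simp)
        rw [Matrix.det_fin_one, Matrix.submatrix_apply]
        exact hent (r 0) (c 0)
      · -- minors of order K'+2
        intro hK r c hr hc
        have hKm : K' < p := by omega
        have ihm : ∀ (r' : Fin (K' + 1) → Fin m) (c' : Fin (K' + 1) → Fin n),
            StrictMono r' → StrictMono c' → 0 < ε ⟨K', hKm⟩ * (A.submatrix r' c').det := by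
          intro r' c' hr' hc'
          exact ih K' (by omega) hKm r' c' hr' hc'
        -- Step A: arbitrary rows, contiguous columns
        have hA : ∀ (bw : ℕ) (hbw : bw + (K' + 2) ≤ n) (rr : Fin (K' + 2) → Fin m),
            StrictMono rr →
            0 < ε ⟨K' + 1, hK⟩ * (A.submatrix rr
              (fun i : Fin (K' + 2) => (⟨bw + i.val, by omega⟩ : Fin n))).det := by
          intro bw hbw rr hrr
          have hres := SSRAux.rowext
            (A.submatrix id (fun i : Fin (K' + 2) => (⟨bw + i.val, by omega⟩ : Fin n)))
            (ε ⟨K' + 1, hK⟩) (ε ⟨K', hKm⟩) ?_ ?_ rr hrr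
          · rw [Matrix.submatrix_submatrix] at hres
            exact hres
          · intro a ha
            have hcon := h ⟨K' + 1, hK⟩ a bw ha hbw
            rw [Matrix.submatrix_submatrix]
            exact hcon
          · intro rr2 hrr2
            rw [Matrix.submatrix_submatrix]
            have hcols : ((fun i : Fin (K' + 2) => (⟨bw + i.val, by omega⟩ : Fin n)) ∘
                Fin.castSucc) = (fun i : Fin (K' + 1) => (⟨bw + i.val, by omega⟩ : Fin n)) := by
              funext i
              apply Fin.ext
              show bw + (Fin.castSucc i).val = bw + i.val
              rw [Fin.coe_castSucc]
            rw [hcols]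
            exact ihm rr2 _ hrr2
              (fun i j hij => by rw [Fin.mk_lt_mk]; exact Nat.add_lt_add_left hij bw)
        -- Step B: transpose and extend columns
        have hres := SSRAux.rowext ((A.submatrix r id).transpose)
          (ε ⟨K' + 1, hK⟩) (ε ⟨K', hKm⟩) ?_ ?_ c hc
        · have hMt : ((A.submatrix r id).transpose).submatrix c id
              = (A.submatrix r c).transpose := by
            ext i jj
            simp [Matrix.submatrix_apply, Matrix.transpose_apply]
          rw [hMt, Matrix.det_transpose] at hres
          exact hres
        · intro a ha
          have hMt : ((A.submatrix r id).transpose).submatrix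
              (fun i : Fin (K' + 2) => (⟨a + i.val, by omega⟩ : Fin n)) id
              = (A.submatrix r (fun i : Fin (K' + 2) => (⟨a + i.val, by omega⟩ : Fin n))).transpose := by
            ext i jj
            simp [Matrix.submatrix_apply, Matrix.transpose_apply]
          rw [hMt, Matrix.det_transpose]
          exact hA a ha r hr
        · intro cc hcc
          have hMt : ((A.submatrix r id).transpose).submatrix cc Fin.castSucc
              = (A.submatrix (r ∘ Fin.castSucc) cc).transpose := by
            ext i jj
            simp [Matrix.submatrix_apply, Matrix.transpose_apply]
          rw [hMt, Matrix.det_transpose]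
          exact ihm (r ∘ Fin.castSucc) cc (hr.comp Fin.strictMono_castSucc) hcc
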